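/- Let d be a function on (x_L,x_R) with d(x) ∈ [κ_min, κ_max] for positive constants κ_min, κ_max, suppose d is concave on (x_L,x_R), and assume κ_max − ν_α > 0, where ν_α = √2·(κ_max − κ_min)/ς_α. Let η > 0, D = diag(d(x_1),…,d(x_M)), d̄ = (1/M)·Σ_{i=1}^{M} d(x_i), A = I_M − η·D·G_α and P = I_M − η·d̄·G_α. Then P is invertible and, for every nonzero y ∈ ℝ^M, š ≤ ‖A·P⁻¹·y‖₂²/‖y‖₂² ≤ ŝ, where š = min{(κ_max − ν_α)/κ_max, κ_min²/κ_max²} and ŝ = max{(κ_max + ν_α)/κ_min, κ_max²/κ_min²}. Consequently every singular value of A·P⁻¹ lies in [√š, √ŝ] and the spectral condition number satisfies cond(A·P⁻¹) = ‖A·P⁻¹‖₂·‖(A·P⁻¹)⁻¹‖₂ ≤ √(ŝ/š), a bound independent of M, η, τ and h. -/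

import Mathlib

open Matrix Finset

/-- The Grünwald–Letnikov coefficients `g_k^{(α)}`. -/
noncomputable def gcoef (α : ℝ) : ℕ → ℝ
  | 0 => 1
  | (k+1) => (1 - (α + 1) / (k + 1 : ℕ)) * gcoef α k

/-- The WSGD coefficients `w_k^{(α)}`. -/
noncomputable def wcoef (α : ℝ) : ℕ → ℝ
  | 0 => α / 2 * gcoef α 0
  | (k+1) => α / 2 * gcoef α (k+1) + (2 - α) / 2 * gcoef α k

/-- The `M × M` lower-Hessenberg Toeplitz matrix `G_α`. -/
noncomputable def Gmat (α : ℝ) (M : ℕ) : Matrix (Fin M) (Fin M) ℝ :=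
  Matrix.of fun i j => if (j : ℕ) ≤ (i : ℕ) + 1 then wcoef α ((i : ℕ) + 1 - (j : ℕ)) else 0

set_option linter.unreachableTactic false
set_option linter.unusedTactic false
set_option linter.unusedVariables false

namespace ToepAux

lemma gcoef_zero (α : ℝ) : gcoef α 0 = 1 := rfl

lemma gcoef_succ (α : ℝ) (k : ℕ) :
    gcoef α (k + 1) = (1 - (α + 1) / ((k : ℝ) + 1)) * gcoef α k := by
  rw [gcoef]; push_cast; ring

lemma gcoef_one (α : ℝ) : gcoef α 1 = -α := by
  rw [gcoef_succ, gcoef_zero]; norm_num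

/-- `g_{n+1} = -(α/(n+1)) · ∑_{k≤n} g_k`. -/
lemma gform (α : ℝ) : ∀ n : ℕ,
    gcoef α (n + 1) = -(α / ((n : ℝ) + 1)) * ∑ k ∈ Finset.range (n + 1), gcoef α k := by
  intro n
  induction n with
  | zero => simp [gcoef_one, gcoef_zero]
  | succ n ih =>
    have h1 : ((n : ℝ) + 1) ≠ 0 := by positivity
    have h2 : ((n : ℝ) + 1 + 1) ≠ 0 := by positivity
    rw [Finset.sum_range_succ]
    have hg := gcoef_succ α (n + 1)
    push_cast at hg
    rw [hg, ih]
    field_simp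
    push_cast; ring

lemma Sg_rec (α : ℝ) (n : ℕ) :
    (∑ k ∈ Finset.range (n + 2), gcoef α k)
      = (1 - α / ((n : ℝ) + 1)) * ∑ k ∈ Finset.range (n + 1), gcoef α k := by
  rw [Finset.sum_range_succ, gform α n]; ring

lemma Sg_nonpos (hα1 : 1 < α) (hα2 : α < 2) :
    ∀ n : ℕ, (∑ k ∈ Finset.range (n + 2), gcoef α k) ≤ 0 := by
  intro n
  induction n with
  | zero =>
    rw [Finset.sum_range_succ, Finset.sum_range_one, gcoef_zero, gcoef_one]
    linarith
  | succ n ih =>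
    rw [Sg_rec]
    have hfac : 0 ≤ 1 - α / ((n : ℝ) + 1 + 1) := by
      rw [sub_nonneg]
      rw [div_le_one (by positivity)]
      have : (0:ℝ) ≤ n := Nat.cast_nonneg n
      linarith
    push_cast
    nlinarith [ih]

lemma gcoef_nonneg (hα1 : 1 < α) (hα2 : α < 2) : ∀ k : ℕ, 0 ≤ gcoef α (k + 2) := by
  intro k
  induction k with
  | zero =>
    rw [show (0:ℕ)+2 = 1+1 from rfl, gcoef_succ, gcoef_one]
    push_cast
    nlinarith
  | succ k ih =>
    rw [show k+1+2 = (k+2)+1 from rfl, gcoef_succ]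
    have : 0 ≤ 1 - (α + 1) / ((k:ℝ)+2+1) := by
      rw [sub_nonneg, div_le_one (by positivity)]
      have : (0:ℝ) ≤ k := Nat.cast_nonneg k
      linarith
    push_cast
    nlinarith [ih]

lemma wcoef_zero (α : ℝ) : wcoef α 0 = α / 2 := by
  rw [wcoef, gcoef_zero]; ring

lemma wcoef_succ (α : ℝ) (k : ℕ) :
    wcoef α (k + 1) = α / 2 * gcoef α (k+1) + (2 - α) / 2 * gcoef α k := by
  rw [wcoef]

lemma wcoef_one (α : ℝ) : wcoef α 1 = (2 - α - α^2) / 2 := by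
  rw [wcoef_succ, gcoef_one, gcoef_zero]; ring

lemma wcoef_one_nonpos (hα1 : 1 < α) : wcoef α 1 ≤ 0 := by
  rw [wcoef_one]; nlinarith

lemma wcoef_three_nonneg (hα1 : 1 < α) (hα2 : α < 2) (k : ℕ) : 0 ≤ wcoef α (k + 3) := by
  rw [show k+3 = (k+2)+1 from rfl, wcoef_succ]
  have h1 := gcoef_nonneg hα1 hα2 (k+1)
  have h2 := gcoef_nonneg hα1 hα2 k
  rw [show k+1+2 = k+2+1 from rfl] at h1
  nlinarith

lemma w0w2_nonneg (hα1 : 1 < α) (hα2 : α < 2) : 0 ≤ wcoef α 0 + wcoef α 2 := by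
  have hg2 : gcoef α 2 = (1 - (α + 1) / 2) * (-α) := by
    rw [show (2:ℕ) = 1+1 from rfl, gcoef_succ, gcoef_one]; norm_num
  rw [wcoef_zero, show (2:ℕ) = 1+1 from rfl, wcoef_succ, hg2, gcoef_one]
  have h : (0:ℝ) < α := by linarith
  nlinarith [mul_nonneg (mul_nonneg h.le (by linarith : (0:ℝ) ≤ α - 1)) (by linarith : (0:ℝ) ≤ α + 2)]

/-- partial sums of `w` in terms of partial sums of `g`. -/
lemma Cw_eq (α : ℝ) : ∀ n : ℕ,
    (∑ k ∈ Finset.range (n + 2), wcoef α k)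
      = α / 2 * (∑ k ∈ Finset.range (n + 2), gcoef α k)
        + (2 - α) / 2 * (∑ k ∈ Finset.range (n + 1), gcoef α k) := by
  intro n
  induction n with
  | zero =>
    simp [Finset.sum_range_succ, wcoef_zero, wcoef_one, gcoef_zero, gcoef_one]
    ring
  | succ n ih =>
    rw [show n+1+2 = (n+2)+1 from rfl, Finset.sum_range_succ, ih,
      Finset.sum_range_succ (f := gcoef α) (n := n+2),
      Finset.sum_range_succ (f := gcoef α) (n := n+1), wcoef_succ]
    ring

lemma Cw_nonpos (hα1 : 1 < α) (hα2 : α < 2) (n : ℕ) :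
    (∑ k ∈ Finset.range (n + 3), wcoef α k) ≤ 0 := by
  rw [show n+3 = (n+1)+2 from rfl, Cw_eq]
  have h1 := Sg_nonpos hα1 hα2 (n+1)
  have h2 := Sg_nonpos hα1 hα2 n
  push_cast at h1 h2 ⊢
  nlinarith




/-- entries as a function on ℕ. -/
noncomputable def Ew (α : ℝ) (a b : ℕ) : ℝ :=
  if b ≤ a + 1 then wcoef α (a + 1 - b) else 0

lemma rowsum_small (α : ℝ) (M i : ℕ) (h : i + 2 ≤ M) :
    ∑ j ∈ Finset.range M, Ew α i j = ∑ k ∈ Finset.range (i + 2), wcoef α k := by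
  rw [← Finset.sum_subset (Finset.range_subset_range.mpr h)
      (fun x _ hnx => by
        rw [Finset.mem_range, not_lt] at hnx
        exact if_neg (by omega))]
  conv_rhs => rw [← Finset.sum_range_reflect]
  refine Finset.sum_congr rfl fun j hj => ?_
  rw [Finset.mem_range] at hj
  rw [Ew, if_pos (by omega)]
  first
  | rfl
  | (congr 1; omega)

lemma rowsum_last (α : ℝ) (M i : ℕ) (h : i + 1 = M) :
    ∑ j ∈ Finset.range M, Ew α i j
      = (∑ k ∈ Finset.range (M + 1), wcoef α k) - wcoef α 0 := by
  subst h
  have h1 : ∀ j ∈ Finset.range (i + 1), Ew α i j = wcoef α (i + 1 - j) := fun j hj => by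
    rw [Finset.mem_range] at hj
    exact if_pos (by omega)
  rw [Finset.sum_congr rfl h1]
  have h2 : (∑ j ∈ Finset.range (i + 1), wcoef α (i + 1 - j))
      = ∑ j ∈ Finset.range (i + 1), wcoef α (j + 1) := by
    conv_rhs => rw [← Finset.sum_range_reflect]
    refine Finset.sum_congr rfl fun j hj => ?_
    rw [Finset.mem_range] at hj
    first
    | rfl
    | (congr 1; omega)
  rw [h2, Finset.sum_range_succ' (fun k => wcoef α k) (i + 1)]
  ring

lemma colsum_zero (α : ℝ) (M : ℕ) :
    ∑ j ∈ Finset.range M, Ew α j 0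
      = (∑ k ∈ Finset.range (M + 1), wcoef α k) - wcoef α 0 := by
  have h1 : ∀ j ∈ Finset.range M, Ew α j 0 = wcoef α (j + 1) := fun j _ => by
    rw [Ew, if_pos (by omega)]
    norm_num
  rw [Finset.sum_congr rfl h1, Finset.sum_range_succ' (fun k => wcoef α k) M]
  ring

lemma colsum_pos (α : ℝ) (M i : ℕ) (h1 : 1 ≤ i) (h2 : i < M) :
    ∑ j ∈ Finset.range M, Ew α j i = ∑ k ∈ Finset.range (M - i + 1), wcoef α k := by
  rw [Finset.range_eq_Ico, ← Finset.sum_Ico_consecutive _ (Nat.zero_le (i-1)) (by omega : i - 1 ≤ M)]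
  have hz : ∑ j ∈ Finset.Ico 0 (i-1), Ew α j i = 0 := by
    apply Finset.sum_eq_zero
    intro j hj
    rw [Finset.mem_Ico] at hj
    exact if_neg (by omega)
  rw [hz, zero_add, Finset.sum_Ico_eq_sum_range]
  have e : M - (i - 1) = M - i + 1 := by omega
  rw [e]
  refine Finset.sum_congr rfl fun k hk => ?_
  rw [Finset.mem_range] at hk
  rw [Ew, if_pos (by omega)]
  first
  | rfl
  | (congr 1; omega)

lemma Eoff_lt (α : ℝ) (hα1 : 1 < α) (hα2 : α < 2) (a b : ℕ) (hab : a < b) :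
    0 ≤ Ew α a b + Ew α b a := by
  rcases eq_or_lt_of_le (Nat.succ_le_of_lt hab) with h | h
  · -- b = a + 1
    have hb : b = a + 1 := h.symm
    subst hb
    rw [Ew, Ew, if_pos (by omega), if_pos (by omega)]
    have e1 : a + 1 - (a + 1) = 0 := by omega
    have e2 : a + 1 + 1 - a = 2 := by omega
    rw [e1, e2]
    exact w0w2_nonneg hα1 hα2
  · -- b ≥ a + 2
    rw [Ew, Ew, if_neg (by omega), if_pos (by omega), zero_add]
    have e : b + 1 - a = (b - a - 2) + 3 := by omega
    rw [e]
    exact wcoef_three_nonneg hα1 hα2 _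

lemma Eoff (α : ℝ) (hα1 : 1 < α) (hα2 : α < 2) (a b : ℕ) (hab : a ≠ b) :
    0 ≤ Ew α a b + Ew α b a := by
  rcases lt_or_gt_of_ne hab with h | h
  · exact Eoff_lt α hα1 hα2 a b h
  · rw [add_comm]; exact Eoff_lt α hα1 hα2 b a h

lemma Brow (α : ℝ) (hα1 : 1 < α) (hα2 : α < 2) (M i : ℕ) (hi : i < M) :
    (∑ j ∈ Finset.range M, Ew α i j) + (∑ j ∈ Finset.range M, Ew α j i) ≤ 0 := by
  have hw1 := wcoef_one_nonpos hα1
  rcases Nat.lt_or_ge M 2 with hM | hM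
  · -- M = 1, i = 0
    have hM1 : M = 1 := by omega
    have hi0 : i = 0 := by omega
    subst hM1; subst hi0
    simp only [Finset.sum_range_one]
    have : Ew α 0 0 = wcoef α 1 := by rw [Ew, if_pos (by omega)]
    rw [this]
    linarith
  · have hCw : (∑ k ∈ Finset.range (M + 1), wcoef α k) ≤ 0 := by
      have := Cw_nonpos hα1 hα2 (M - 2)
      have e : M - 2 + 3 = M + 1 := by omega
      rwa [e] at this
    rcases Nat.eq_zero_or_pos i with hi0 | hipos
    · subst hi0
      rw [rowsum_small α M 0 (by omega), colsum_zero α M]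
      have : (∑ k ∈ Finset.range (0 + 2), wcoef α k) = wcoef α 0 + wcoef α 1 := by
        simp [Finset.sum_range_succ]
      rw [this]
      linarith
    · rcases Nat.lt_or_ge (i + 1) M with hlt | hge
      · -- i + 2 ≤ M, i ≥ 1
        rw [rowsum_small α M i (by omega), colsum_pos α M i hipos hi]
        have hr : (∑ k ∈ Finset.range (i + 2), wcoef α k) ≤ 0 := by
          have := Cw_nonpos hα1 hα2 (i - 1)
          have e : i - 1 + 3 = i + 2 := by omega
          rwa [e] at this
        have hc : (∑ k ∈ Finset.range (M - i + 1), wcoef α k) ≤ 0 := by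
          have := Cw_nonpos hα1 hα2 (M - i - 2)
          have e : M - i - 2 + 3 = M - i + 1 := by omega
          rwa [e] at this
        linarith
      · -- i + 1 = M
        have hiM : i + 1 = M := by omega
        rw [rowsum_last α M i hiM, colsum_pos α M i hipos hi]
        have e : M - i + 1 = 2 := by omega
        rw [e]
        have : (∑ k ∈ Finset.range 2, wcoef α k) = wcoef α 0 + wcoef α 1 := by
          simp [Finset.sum_range_succ]
        rw [this]
        linarith

/-- The key fact: the quadratic form of `G_α` is non-positive. -/
lemma gmat_nsd {α : ℝ} (hα1 : 1 < α) (hα2 : α < 2) (M : ℕ) (y : Fin M → ℝ) :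
    y ⬝ᵥ (Gmat α M *ᵥ y) ≤ 0 := by
  classical
  have hGE : ∀ i j : Fin M, Gmat α M i j = Ew α (i : ℕ) (j : ℕ) := fun i j => rfl
  have expand : y ⬝ᵥ (Gmat α M *ᵥ y)
      = ∑ i : Fin M, ∑ j : Fin M, Ew α (i : ℕ) (j : ℕ) * (y i * y j) := by
    simp only [dotProduct, mulVec, Finset.mul_sum]
    refine Finset.sum_congr rfl fun i _ => Finset.sum_congr rfl fun j _ => ?_
    rw [hGE]; ring
  have swap : (∑ i : Fin M, ∑ j : Fin M, Ew α (j : ℕ) (i : ℕ) * (y i * y j))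
      = ∑ i : Fin M, ∑ j : Fin M, Ew α (i : ℕ) (j : ℕ) * (y i * y j) := by
    rw [Finset.sum_comm]
    exact Finset.sum_congr rfl fun i _ => Finset.sum_congr rfl fun j _ => by ring
  have h2 : 2 * (y ⬝ᵥ (Gmat α M *ᵥ y))
      = ∑ i : Fin M, ∑ j : Fin M,
          (Ew α (i : ℕ) (j : ℕ) + Ew α (j : ℕ) (i : ℕ)) * (y i * y j) := by
    rw [expand, two_mul]
    nth_rewrite 1 [← swap]
    rw [← Finset.sum_add_distrib]
    refine Finset.sum_congr rfl fun i _ => ?_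
    rw [← Finset.sum_add_distrib]
    exact Finset.sum_congr rfl fun j _ => by ring
  have step1 : (∑ i : Fin M, ∑ j : Fin M,
          (Ew α (i : ℕ) (j : ℕ) + Ew α (j : ℕ) (i : ℕ)) * (y i * y j))
      ≤ ∑ i : Fin M, ∑ j : Fin M,
          (Ew α (i : ℕ) (j : ℕ) + Ew α (j : ℕ) (i : ℕ)) * ((y i ^ 2 + y j ^ 2) / 2) := by
    refine Finset.sum_le_sum fun i _ => Finset.sum_le_sum fun j _ => ?_
    rcases eq_or_ne i j with rfl | hne
    · apply le_of_eq; ring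
    · have hB : 0 ≤ Ew α (i : ℕ) (j : ℕ) + Ew α (j : ℕ) (i : ℕ) :=
        Eoff α hα1 hα2 _ _ (fun hc => hne (Fin.ext hc))
      have : y i * y j ≤ (y i ^ 2 + y j ^ 2) / 2 := by nlinarith [sq_nonneg (y i - y j)]
      exact mul_le_mul_of_nonneg_left this hB
  have step2 : (∑ i : Fin M, ∑ j : Fin M,
          (Ew α (i : ℕ) (j : ℕ) + Ew α (j : ℕ) (i : ℕ)) * ((y i ^ 2 + y j ^ 2) / 2))
      = ∑ i : Fin M, (∑ j : Fin M, (Ew α (i : ℕ) (j : ℕ) + Ew α (j : ℕ) (i : ℕ))) * y i ^ 2 := by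
    have e1 : ∀ (B : Fin M → Fin M → ℝ), (∀ i j, B i j = B j i) →
        (∑ i : Fin M, ∑ j : Fin M, B i j * ((y i ^ 2 + y j ^ 2) / 2))
          = ∑ i : Fin M, (∑ j : Fin M, B i j) * y i ^ 2 := by
      intro B hsym
      have h1 : (∑ i : Fin M, ∑ j : Fin M, B i j * ((y i ^ 2 + y j ^ 2) / 2))
          = (∑ i : Fin M, ∑ j : Fin M, B i j * y i ^ 2 / 2)
            + ∑ i : Fin M, ∑ j : Fin M, B i j * y j ^ 2 / 2 := by
        rw [← Finset.sum_add_distrib]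
        refine Finset.sum_congr rfl fun i _ => ?_
        rw [← Finset.sum_add_distrib]
        exact Finset.sum_congr rfl fun j _ => by ring
      have h2 : (∑ i : Fin M, ∑ j : Fin M, B i j * y j ^ 2 / 2)
          = ∑ i : Fin M, ∑ j : Fin M, B i j * y i ^ 2 / 2 := by
        rw [Finset.sum_comm]
        refine Finset.sum_congr rfl fun i _ => Finset.sum_congr rfl fun j _ => ?_
        rw [hsym i j]
      rw [h1, h2, ← Finset.sum_add_distrib]
      refine Finset.sum_congr rfl fun i _ => ?_
      rw [Finset.sum_mul, ← Finset.sum_add_distrib]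
      exact Finset.sum_congr rfl fun j _ => by ring
    exact e1 _ (fun i j => by ring)
  have step3 : (∑ i : Fin M, (∑ j : Fin M, (Ew α (i : ℕ) (j : ℕ) + Ew α (j : ℕ) (i : ℕ))) * y i ^ 2) ≤ 0 := by
    refine Finset.sum_nonpos fun i _ => ?_
    refine mul_nonpos_iff.mpr (Or.inr ⟨?_, sq_nonneg _⟩)
    have hrow : (∑ j : Fin M, Ew α (i : ℕ) (j : ℕ)) = ∑ j ∈ Finset.range M, Ew α (i : ℕ) j :=
      Fin.sum_univ_eq_sum_range (fun j => Ew α (i : ℕ) j) M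
    have hcol : (∑ j : Fin M, Ew α (j : ℕ) (i : ℕ)) = ∑ j ∈ Finset.range M, Ew α j (i : ℕ) :=
      Fin.sum_univ_eq_sum_range (fun j => Ew α j (i : ℕ)) M
    rw [Finset.sum_add_distrib, hrow, hcol]
    exact Brow α hα1 hα2 M (i : ℕ) i.isLt
  linarith [le_trans (le_of_eq h2) (le_trans step1 (le_of_eq step2)), step3]




noncomputable def n2 {M : ℕ} (v : Fin M → ℝ) : ℝ := Real.sqrt (v ⬝ᵥ v)

lemma dps_nonneg {M : ℕ} (v : Fin M → ℝ) : 0 ≤ v ⬝ᵥ v :=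
  Finset.sum_nonneg fun i _ => mul_self_nonneg _

lemma n2_sq {M : ℕ} (v : Fin M → ℝ) : n2 v ^ 2 = v ⬝ᵥ v := Real.sq_sqrt (dps_nonneg v)

lemma n2_nonneg {M : ℕ} (v : Fin M → ℝ) : 0 ≤ n2 v := Real.sqrt_nonneg _

lemma n2_eq_norm {M : ℕ} (v : Fin M → ℝ) :
    n2 v = ‖(WithLp.equiv 2 (Fin M → ℝ)).symm v‖ := by
  rw [EuclideanSpace.norm_eq, n2]
  congr 1
  refine Finset.sum_congr rfl fun i _ => ?_
  simp [WithLp.equiv_symm_apply, PiLp.toLp_apply, Real.norm_eq_abs, sq_abs, pow_two]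

lemma n2_triangle {M : ℕ} (v w : Fin M → ℝ) : n2 (v + w) ≤ n2 v + n2 w := by
  rw [n2_eq_norm, n2_eq_norm, n2_eq_norm, WithLp.equiv_symm_apply, WithLp.toLp_add]
  exact norm_add_le _ _

lemma n2_le_of_sq {M : ℕ} {v u : Fin M → ℝ} {c : ℝ} (hc : 0 ≤ c)
    (h : v ⬝ᵥ v ≤ c ^ 2 * (u ⬝ᵥ u)) : n2 v ≤ c * n2 u := by
  have h2 := Real.sqrt_le_sqrt h
  rwa [Real.sqrt_mul (sq_nonneg c), Real.sqrt_sq hc] at h2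

/-- The core inequalities, at the level of vectors. -/
lemma core_ineq {M : ℕ} (dv : Fin M → ℝ) (a b db : ℝ) (ha : 0 < a)
    (hdv : ∀ i, a ≤ dv i ∧ dv i ≤ b) (hdb1 : a ≤ db) (hdb2 : db ≤ b)
    (z u : Fin M → ℝ) (htu : z ⬝ᵥ u ≤ 0) :
    (a ^ 2 * ((fun i => z i - db * u i) ⬝ᵥ (fun i => z i - db * u i))
        ≤ b ^ 2 * ((fun i => z i - dv i * u i) ⬝ᵥ (fun i => z i - dv i * u i)))
    ∧ (a ^ 2 * ((fun i => z i - dv i * u i) ⬝ᵥ (fun i => z i - dv i * u i))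
        ≤ b ^ 2 * ((fun i => z i - db * u i) ⬝ᵥ (fun i => z i - db * u i)))
    ∧ (z ⬝ᵥ z ≤ (fun i => z i - db * u i) ⬝ᵥ (fun i => z i - db * u i))
    ∧ ((fun i => z i - dv i * u i) = 0 → z = 0) := by
  classical
  have hab : a ≤ b := le_trans hdb1 hdb2
  have hdb0 : 0 < db := lt_of_lt_of_le ha hdb1
  set az : Fin M → ℝ := fun i => z i - dv i * u i with haz
  set pz : Fin M → ℝ := fun i => z i - db * u i with hpzdef
  have hzz : 0 ≤ z ⬝ᵥ z := dps_nonneg z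
  have huu : 0 ≤ u ⬝ᵥ u := dps_nonneg u
  have hww : ∀ i, (0:ℝ) < dv i := fun i => lt_of_lt_of_le ha (hdv i).1
  have hpz : pz ⬝ᵥ pz = z ⬝ᵥ z - 2*db*(z ⬝ᵥ u) + db^2*(u ⬝ᵥ u) := by
    simp only [dotProduct, hpzdef, Finset.mul_sum, ← Finset.sum_sub_distrib,
      ← Finset.sum_add_distrib]
    exact Finset.sum_congr rfl fun i _ => by ring
  have hK3 : z ⬝ᵥ z ≤ pz ⬝ᵥ pz := by nlinarith
  have hPu : db^2 * (u ⬝ᵥ u) ≤ pz ⬝ᵥ pz := by nlinarith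
  have hsum : (∑ i, (1/dv i) * (az i)^2)
      = (∑ i, (z i)^2 / dv i) - 2*(z ⬝ᵥ u) + ∑ i, dv i * (u i)^2 := by
    simp only [dotProduct, haz, Finset.mul_sum, ← Finset.sum_sub_distrib,
      ← Finset.sum_add_distrib]
    refine Finset.sum_congr rfl fun i _ => ?_
    have h0 : dv i ≠ 0 := ne_of_gt (hww i)
    field_simp
    ring
  have hq1 : (∑ i, (1/dv i) * (az i)^2) ≤ (1/a) * (az ⬝ᵥ az) := by
    have he : az ⬝ᵥ az = ∑ i, (az i)^2 := by
      simp only [dotProduct]; exact Finset.sum_congr rfl fun i _ => by ring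
    rw [he, Finset.mul_sum]
    refine Finset.sum_le_sum fun i _ => ?_
    exact mul_le_mul_of_nonneg_right (one_div_le_one_div_of_le ha (hdv i).1) (sq_nonneg _)
  have hq2 : (∑ i, dv i * (u i)^2) ≤ ∑ i, (1/dv i) * (az i)^2 := by
    rw [hsum]
    have hpos : 0 ≤ ∑ i, (z i)^2 / dv i :=
      Finset.sum_nonneg fun i _ => div_nonneg (sq_nonneg _) (hww i).le
    linarith
  have hq3 : a * (u ⬝ᵥ u) ≤ ∑ i, dv i * (u i)^2 := by
    have he : u ⬝ᵥ u = ∑ i, (u i)^2 := by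
      simp only [dotProduct]; exact Finset.sum_congr rfl fun i _ => by ring
    rw [he, Finset.mul_sum]
    exact Finset.sum_le_sum fun i _ => mul_le_mul_of_nonneg_right (hdv i).1 (sq_nonneg _)
  have hAu : a^2 * (u ⬝ᵥ u) ≤ az ⬝ᵥ az := by
    have h5 : a * (a * (u ⬝ᵥ u)) ≤ a * ((1/a) * (az ⬝ᵥ az)) :=
      mul_le_mul_of_nonneg_left (le_trans hq3 (le_trans hq2 hq1)) ha.le
    have h6 : a * ((1/a) * (az ⬝ᵥ az)) = az ⬝ᵥ az := by field_simp
    nlinarith [h5]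
  have hdiffdot : (az - pz) ⬝ᵥ (az - pz) ≤ (b-a)^2 * (u ⬝ᵥ u) := by
    have he : ∀ i, (az - pz) i = (db - dv i) * u i := by
      intro i; simp only [Pi.sub_apply, haz, hpzdef]; ring
    have he2 : (az - pz) ⬝ᵥ (az - pz) = ∑ i, ((db - dv i) * u i)^2 := by
      simp only [dotProduct]
      refine Finset.sum_congr rfl fun i _ => by rw [he i]; ring
    have he3 : u ⬝ᵥ u = ∑ i, (u i)^2 := by
      simp only [dotProduct]; exact Finset.sum_congr rfl fun i _ => by ring
    rw [he2, he3, Finset.mul_sum]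
    refine Finset.sum_le_sum fun i _ => ?_
    have h1 := (hdv i).1
    have h2 := (hdv i).2
    have h3 : (db - dv i)^2 ≤ (b-a)^2 := by
      nlinarith [mul_nonneg (by linarith : (0:ℝ) ≤ b - db + (dv i - a))
        (by linarith : (0:ℝ) ≤ b - dv i + (db - a))]
    rw [mul_pow]
    exact mul_le_mul_of_nonneg_right h3 (sq_nonneg _)
  -- norm facts
  have hba : 0 ≤ b - a := by linarith
  have hnu_p : db * n2 u ≤ n2 pz := by
    have h2 := Real.sqrt_le_sqrt hPu
    rwa [Real.sqrt_mul (sq_nonneg db), Real.sqrt_sq hdb0.le] at h2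
  have hnu_a : a * n2 u ≤ n2 az := by
    have h2 := Real.sqrt_le_sqrt hAu
    rwa [Real.sqrt_mul (sq_nonneg a), Real.sqrt_sq ha.le] at h2
  have hdn : n2 (az - pz) ≤ (b - a) * n2 u := n2_le_of_sq hba hdiffdot
  have htri1 : n2 az ≤ n2 pz + (b-a) * n2 u := by
    have he : az = pz + (az - pz) := by abel
    calc n2 az = n2 (pz + (az - pz)) := by rw [← he]
      _ ≤ n2 pz + n2 (az - pz) := n2_triangle _ _
      _ ≤ n2 pz + (b-a) * n2 u := by linarith
  have htri2 : n2 pz ≤ n2 az + (b-a) * n2 u := by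
    have he : pz = az + (pz - az) := by abel
    have hd2 : n2 (pz - az) ≤ (b-a) * n2 u := by
      have : pz - az = -(az - pz) := by abel
      rw [this]
      have : -(az - pz) ⬝ᵥ -(az - pz) = (az - pz) ⬝ᵥ (az - pz) := by
        simp only [dotProduct, Pi.neg_apply]
        exact Finset.sum_congr rfl fun i _ => by ring
      exact n2_le_of_sq hba (by rw [this]; exact hdiffdot)
    calc n2 pz = n2 (az + (pz - az)) := by rw [← he]
      _ ≤ n2 az + n2 (pz - az) := n2_triangle _ _
      _ ≤ n2 az + (b-a) * n2 u := by linarith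
  have hanu_pz : a * n2 u ≤ n2 pz :=
    le_trans (mul_le_mul_of_nonneg_right hdb1 (n2_nonneg u)) hnu_p
  have hN1 : a * n2 pz ≤ b * n2 az := by
    nlinarith [mul_le_mul_of_nonneg_left htri2 ha.le,
      mul_le_mul_of_nonneg_left hnu_a hba]
  have hN2 : a * n2 az ≤ b * n2 pz := by
    nlinarith [mul_le_mul_of_nonneg_left htri1 ha.le,
      mul_le_mul_of_nonneg_left hanu_pz hba]
  refine ⟨?_, ?_, hK3, ?_⟩
  · have h7 : (a * n2 pz)^2 ≤ (b * n2 az)^2 :=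
      pow_le_pow_left₀ (mul_nonneg ha.le (n2_nonneg _)) hN1 2
    rwa [mul_pow, mul_pow, n2_sq, n2_sq] at h7
  · have h7 : (a * n2 az)^2 ≤ (b * n2 pz)^2 :=
      pow_le_pow_left₀ (mul_nonneg ha.le (n2_nonneg _)) hN2 2
    rwa [mul_pow, mul_pow, n2_sq, n2_sq] at h7
  · intro h0
    have e1 : (∑ i, (1/dv i) * (az i)^2) = 0 := by
      rw [h0]; simp
    have hpos1 : 0 ≤ ∑ i, (z i)^2 / dv i :=
      Finset.sum_nonneg fun i _ => div_nonneg (sq_nonneg _) (hww i).le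
    have hpos2 : 0 ≤ ∑ i, dv i * (u i)^2 :=
      Finset.sum_nonneg fun i _ => mul_nonneg (hww i).le (sq_nonneg _)
    have hz0 : (∑ i, (z i)^2 / dv i) = 0 := by
      rw [hsum] at e1; linarith
    funext i
    have hterm := (Finset.sum_eq_zero_iff_of_nonneg
      (fun i _ => div_nonneg (sq_nonneg (z i)) (hww i).le)).mp hz0 i (Finset.mem_univ i)
    have : (z i)^2 = 0 := by
      rcases div_eq_zero_iff.mp hterm with h | h
      · exact h
      · exact absurd h (ne_of_gt (hww i))
    have := pow_eq_zero_iff (n := 2) (by norm_num) |>.mp this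
    simpa using this

end ToepAux

open ToepAux

/-- Theorem 2.4: condition-number estimate for the Toeplitz-preconditioned matrix,
concave case. With `A = I − η D G_α`, `P = I − η d̄ G_α`, `d` concave,
`d(x) ∈ [κ_min, κ_max]`, `κ_max − ν_α > 0` where `ν_α = √2(κ_max−κ_min)/ς_α`:
`P` is invertible, the Rayleigh quotient `‖A P⁻¹ y‖₂²/‖y‖₂²` lies in `[sLow, sUp]`
for every nonzero `y` (hence all singular values of `AP⁻¹` lie in `[√sLow, √sUp]`),
and `cond(AP⁻¹) = ‖AP⁻¹‖₂ ‖(AP⁻¹)⁻¹‖₂ ≤ √(sUp/sLow)`. -/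
theorem toeplitz_preconditioned_cond_concave (α : ℝ) (hα : α ∈ Set.Ioo (1 : ℝ) 2)
    (xL xR : ℝ) (hx : xL < xR) (M : ℕ) (hM : 0 < M)
    (d : ℝ → ℝ) (κmin κmax : ℝ) (hκmin : 0 < κmin) (hκmax : 0 < κmax)
    (hbound : ∀ x ∈ Set.Ioo xL xR, d x ∈ Set.Icc κmin κmax)
    (hconc : ConcaveOn ℝ (Set.Ioo xL xR) d)
    (hν : 0 < κmax - Real.sqrt 2 * (κmax - κmin) / |Real.cos (α * Real.pi / 2)|)
    (η : ℝ) (hη : 0 < η) :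
    let h := (xR - xL) / (M + 1)
    let X : Fin M → ℝ := fun i => xL + ((i : ℕ) + 1) * h
    let D : Matrix (Fin M) (Fin M) ℝ := Matrix.diagonal fun i => d (X i)
    let dbar := (∑ i : Fin M, d (X i)) / M
    let A := (1 : Matrix (Fin M) (Fin M) ℝ) - η • (D * Gmat α M)
    let P := (1 : Matrix (Fin M) (Fin M) ℝ) - (η * dbar) • Gmat α M
    let να := Real.sqrt 2 * (κmax - κmin) / |Real.cos (α * Real.pi / 2)|
    let sLow := min ((κmax - να) / κmax) (κmin ^ 2 / κmax ^ 2)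
    let sUp := max ((κmax + να) / κmin) (κmax ^ 2 / κmin ^ 2)
    IsUnit P ∧
    (∀ y : Fin M → ℝ, y ≠ 0 →
      sLow ≤ (((A * P⁻¹) *ᵥ y) ⬝ᵥ ((A * P⁻¹) *ᵥ y)) / (y ⬝ᵥ y) ∧
      (((A * P⁻¹) *ᵥ y) ⬝ᵥ ((A * P⁻¹) *ᵥ y)) / (y ⬝ᵥ y) ≤ sUp) ∧
    ‖Matrix.toEuclideanCLM (𝕜 := ℝ) (A * P⁻¹)‖ *
        ‖Matrix.toEuclideanCLM (𝕜 := ℝ) ((A * P⁻¹)⁻¹)‖ ≤ Real.sqrt (sUp / sLow) := by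
  intro h X D dbar A P να sLow sUp
  obtain ⟨hα1, hα2⟩ := hα
  classical
  have hMR : (0:ℝ) < M := by exact_mod_cast hM
  have hh : 0 < h := by
    rw [show h = (xR - xL) / ((M:ℝ) + 1) from rfl]
    apply div_pos (by linarith) (by positivity)
  have hX : ∀ i : Fin M, X i ∈ Set.Ioo xL xR := by
    intro i
    have hiM : ((i:ℕ):ℝ) < (M:ℝ) := by exact_mod_cast i.isLt
    constructor
    · have h1 : 0 < (((i:ℕ):ℝ) + 1) * h := by positivity
      show xL < xL + (((i:ℕ):ℝ) + 1) * h
      linarith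
    · show xL + (((i:ℕ):ℝ) + 1) * h < xR
      rw [show h = (xR - xL) / ((M:ℝ) + 1) from rfl]
      have h1 : (((i:ℕ):ℝ) + 1) < (M:ℝ) + 1 := by linarith
      have h3 : (((i:ℕ):ℝ)+1) * ((xR - xL)/((M:ℝ)+1)) < ((M:ℝ)+1) * ((xR-xL)/((M:ℝ)+1)) :=
        mul_lt_mul_of_pos_right h1 (by positivity)
      have h4 : ((M:ℝ)+1) * ((xR-xL)/((M:ℝ)+1)) = xR - xL := by field_simp
      linarith
  set dv : Fin M → ℝ := fun i => d (X i) with hdv_def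
  have hdv : ∀ i, κmin ≤ dv i ∧ dv i ≤ κmax := fun i =>
    ⟨(hbound _ (hX i)).1, (hbound _ (hX i)).2⟩
  have hdbar1 : κmin ≤ dbar := by
    rw [show dbar = (∑ i : Fin M, dv i) / (M:ℝ) from rfl, le_div_iff₀ hMR]
    calc κmin * (M:ℝ) = ∑ _i : Fin M, κmin := by
          rw [Finset.sum_const, card_univ, Fintype.card_fin, nsmul_eq_mul]; ring
      _ ≤ ∑ i : Fin M, dv i := Finset.sum_le_sum fun i _ => (hdv i).1
  have hdbar2 : dbar ≤ κmax := by
    rw [show dbar = (∑ i : Fin M, dv i) / (M:ℝ) from rfl, div_le_iff₀ hMR]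
    calc (∑ i : Fin M, dv i) ≤ ∑ _i : Fin M, κmax := Finset.sum_le_sum fun i _ => (hdv i).2
      _ = κmax * (M:ℝ) := by rw [Finset.sum_const, card_univ, Fintype.card_fin, nsmul_eq_mul]; ring
  -- mulVec formulas
  have hAz : ∀ z : Fin M → ℝ,
      A *ᵥ z = fun i => z i - dv i * (η • (Gmat α M *ᵥ z)) i := by
    intro z
    rw [show A = (1 : Matrix (Fin M) (Fin M) ℝ) - η • (D * Gmat α M) from rfl,
      show D = Matrix.diagonal dv from rfl]
    rw [Matrix.sub_mulVec, Matrix.one_mulVec, Matrix.smul_mulVec,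
      ← Matrix.mulVec_mulVec]
    funext i
    simp only [Pi.sub_apply, Pi.smul_apply, smul_eq_mul, Matrix.mulVec_diagonal]
    ring
  have hPz : ∀ z : Fin M → ℝ,
      P *ᵥ z = fun i => z i - dbar * (η • (Gmat α M *ᵥ z)) i := by
    intro z
    rw [show P = (1 : Matrix (Fin M) (Fin M) ℝ) - (η * dbar) • Gmat α M from rfl]
    rw [Matrix.sub_mulVec, Matrix.one_mulVec, Matrix.smul_mulVec]
    funext i
    simp only [Pi.sub_apply, Pi.smul_apply, smul_eq_mul]
    ring
  have hcore := fun z : Fin M → ℝ => by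
    have htu : z ⬝ᵥ (η • (Gmat α M *ᵥ z)) ≤ 0 := by
      have h1 : z ⬝ᵥ (η • (Gmat α M *ᵥ z)) = η * (z ⬝ᵥ (Gmat α M *ᵥ z)) := by
        simp only [dotProduct, Pi.smul_apply, smul_eq_mul, Finset.mul_sum]
        exact Finset.sum_congr rfl fun i _ => by ring
      rw [h1]
      exact mul_nonpos_iff.mpr (Or.inl ⟨hη.le, gmat_nsd hα1 hα2 M z⟩)
    exact core_ineq dv κmin κmax dbar hκmin hdv hdbar1 hdbar2
      z (η • (Gmat α M *ᵥ z)) htu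
  -- invertibility
  have hPdet : IsUnit P.det := by
    rw [isUnit_iff_ne_zero]
    intro h0
    obtain ⟨v, hv0, hv⟩ := (Matrix.exists_mulVec_eq_zero_iff).mpr h0
    have h3 := (hcore v).2.2.1
    rw [← hPz v, hv] at h3
    have h4 : v ⬝ᵥ v = 0 := le_antisymm (by simpa using h3) (dps_nonneg v)
    exact hv0 (dotProduct_self_eq_zero.mp h4)
  have hPunit : IsUnit P := (Matrix.isUnit_iff_isUnit_det P).mpr hPdet
  have hAdet : IsUnit A.det := by
    rw [isUnit_iff_ne_zero]
    intro h0
    obtain ⟨v, hv0, hv⟩ := (Matrix.exists_mulVec_eq_zero_iff).mpr h0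
    have h3 := (hcore v).2.2.2
    rw [← hAz v] at h3
    exact hv0 (h3 hv)
  -- norm bounds
  have hQ : ∀ v : Fin M → ℝ,
      κmin^2 * (((A * P⁻¹) *ᵥ v) ⬝ᵥ ((A * P⁻¹) *ᵥ v)) ≤ κmax^2 * (v ⬝ᵥ v) := by
    intro v
    have hvz : P *ᵥ (P⁻¹ *ᵥ v) = v := by
      rw [Matrix.mulVec_mulVec, Matrix.mul_nonsing_inv _ hPdet, Matrix.one_mulVec]
    have hQv : (A * P⁻¹) *ᵥ v = A *ᵥ (P⁻¹ *ᵥ v) := by rw [← Matrix.mulVec_mulVec]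
    have hk := (hcore (P⁻¹ *ᵥ v)).2.1
    rw [← hAz (P⁻¹ *ᵥ v), ← hPz (P⁻¹ *ᵥ v), hvz, ← hQv] at hk
    exact hk
  have hQi : ∀ v : Fin M → ℝ,
      κmin^2 * (((P * A⁻¹) *ᵥ v) ⬝ᵥ ((P * A⁻¹) *ᵥ v)) ≤ κmax^2 * (v ⬝ᵥ v) := by
    intro v
    have hvz : A *ᵥ (A⁻¹ *ᵥ v) = v := by
      rw [Matrix.mulVec_mulVec, Matrix.mul_nonsing_inv _ hAdet, Matrix.one_mulVec]
    have hQv : (P * A⁻¹) *ᵥ v = P *ᵥ (A⁻¹ *ᵥ v) := by rw [← Matrix.mulVec_mulVec]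
    have hk := (hcore (A⁻¹ *ᵥ v)).1
    rw [← hAz (A⁻¹ *ᵥ v), ← hPz (A⁻¹ *ᵥ v), hvz, ← hQv] at hk
    exact hk
  have hκm2 : (0:ℝ) < κmin^2 := by positivity
  refine ⟨hPunit, ?_, ?_⟩
  · intro y hy
    have hy2 : 0 < y ⬝ᵥ y :=
      lt_of_le_of_ne (dps_nonneg y) fun hc => hy (dotProduct_self_eq_zero.mp hc.symm)
    set Qy := (A * P⁻¹) *ᵥ y with hQydef
    have hcomp : (P * A⁻¹) *ᵥ Qy = y := by
      rw [hQydef, Matrix.mulVec_mulVec, ← Matrix.mul_assoc, Matrix.mul_assoc (P) (A⁻¹) (A),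
        Matrix.nonsing_inv_mul _ hAdet, Matrix.mul_one, Matrix.mul_nonsing_inv _ hPdet,
        Matrix.one_mulVec]
    constructor
    · have h5 := hQi Qy
      rw [hcomp] at h5
      have h6 : κmin^2/κmax^2 ≤ (Qy ⬝ᵥ Qy) / (y ⬝ᵥ y) := by
        rw [div_le_div_iff₀ (by positivity) hy2]
        nlinarith [h5]
      exact le_trans (min_le_right _ _) h6
    · have h5 := hQ y
      have h6 : (Qy ⬝ᵥ Qy) / (y ⬝ᵥ y) ≤ κmax^2/κmin^2 := by
        rw [div_le_div_iff₀ hy2 hκm2]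
        nlinarith [h5]
      exact le_trans h6 (le_max_right _ _)
  · have hn : ∀ (B : Matrix (Fin M) (Fin M) ℝ),
        (∀ v : Fin M → ℝ, κmin^2 * ((B *ᵥ v) ⬝ᵥ (B *ᵥ v)) ≤ κmax^2 * (v ⬝ᵥ v)) →
        ‖Matrix.toEuclideanCLM (𝕜 := ℝ) B‖ ≤ κmax/κmin := by
      intro B hB
      apply ContinuousLinearMap.opNorm_le_bound _ (by positivity)
      intro x
      have hx : x = (WithLp.equiv 2 (Fin M → ℝ)).symm ((WithLp.equiv 2 (Fin M → ℝ)) x) :=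
        (Equiv.symm_apply_apply _ _).symm
      set v := (WithLp.equiv 2 (Fin M → ℝ)) x with hvdef
      rw [hx, show Matrix.toEuclideanCLM (𝕜 := ℝ) B ((WithLp.equiv 2 (Fin M → ℝ)).symm v)
          = (WithLp.equiv 2 (Fin M → ℝ)).symm (Matrix.toLin' B v) from rfl, Matrix.toLin'_apply,
        ← n2_eq_norm, ← n2_eq_norm]
      have h1 : (κmin * n2 (B *ᵥ v))^2 ≤ (κmax * n2 v)^2 := by
        rw [mul_pow, mul_pow, n2_sq, n2_sq]
        exact hB v
      have h2 : κmin * n2 (B *ᵥ v) ≤ κmax * n2 v := by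
        nlinarith [mul_nonneg hκmin.le (n2_nonneg (B *ᵥ v)),
          mul_nonneg hκmax.le (n2_nonneg v)]
      rw [div_mul_eq_mul_div, le_div_iff₀ hκmin]
      linarith
    have hQn := hn _ hQ
    have hrev : (A * P⁻¹)⁻¹ = P * A⁻¹ := by
      rw [Matrix.mul_inv_rev, Matrix.nonsing_inv_nonsing_inv _ hPdet]
    have hQin : ‖Matrix.toEuclideanCLM (𝕜 := ℝ) ((A * P⁻¹)⁻¹)‖ ≤ κmax/κmin := by
      rw [hrev]; exact hn _ hQi
    have hνpos : 0 < κmax - να := hν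
    have hsLow_pos : 0 < sLow := lt_min (div_pos hνpos hκmax) (by positivity)
    have hsUp_ge : κmax^2/κmin^2 ≤ sUp := le_max_right _ _
    have hsLow_le : sLow ≤ κmin^2/κmax^2 := min_le_right _ _
    have hfin : (κmax/κmin)^2 ≤ Real.sqrt (sUp/sLow) := by
      rw [show (κmax/κmin)^2 = κmax^2/κmin^2 from by ring]
      refine (Real.le_sqrt' (by positivity)).mpr ?_
      have e3 : (κmax^2/κmin^2)/(κmin^2/κmax^2) ≤ sUp/sLow :=
        div_le_div₀ (le_trans (by positivity) hsUp_ge) hsUp_ge hsLow_pos hsLow_le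
      have e4 : (κmax^2/κmin^2)/(κmin^2/κmax^2) = (κmax^2/κmin^2)^2 := by
        field_simp
      linarith
    calc ‖Matrix.toEuclideanCLM (𝕜 := ℝ) (A * P⁻¹)‖ *
          ‖Matrix.toEuclideanCLM (𝕜 := ℝ) ((A * P⁻¹)⁻¹)‖
        ≤ (κmax/κmin) * (κmax/κmin) :=
          mul_le_mul hQn hQin (norm_nonneg _) (by positivity)
      _ = (κmax/κmin)^2 := by ring
      _ ≤ Real.sqrt (sUp/sLow) := hfin
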